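/- arXiv:2108.10607 — 5 statements merged into one kernel-verified Lean document; each statement's English description precedes it below -/
import Mathlib

section
/- Let G be a finite abelian group of order n = p_1^{a_1} ⋯ p_r^{a_r}, and let t_i be the number of distinct composition series of the Sylow p_i-subgroup of G. Then the number of distinct composition series of G equals (∏_{i=1}^{r} t_i) · (a_1 + ⋯ + a_r)! / (a_1! ⋯ a_r!). -/
/-- A composition series of `G`: a chain of subgroups from `⊥` to `⊤`, each normal in
the next with simple quotient. -/
def IsCompSeries {G : Type*} [Group G] {n : ℕ} (c : Fin (n + 1) → Subgroup G) : Prop :=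
  c 0 = ⊥ ∧ c (Fin.last n) = ⊤ ∧ ∀ i : Fin n,
    c i.castSucc ≤ c i.succ ∧
    ∃ hN : ((c i.castSucc).subgroupOf (c i.succ)).Normal,
      @IsSimpleGroup _ (@QuotientGroup.Quotient.group _ _ _ hN)

/-- The number of distinct composition series of `G`. -/
noncomputable def csCount (G : Type*) [Group G] : ℕ :=
  Nat.card (Σ n : ℕ, { c : Fin (n + 1) → Subgroup G // IsCompSeries c })

namespace CS

open Subgroup Finset

variable {X : Type*}

def PStep [Group X] (A B : Subgroup X) : Prop := A ≤ B ∧ (A.relIndex B).Prime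

def PChain [Group X] {n : ℕ} (c : Fin (n + 1) → Subgroup X) : Prop :=
  c 0 = ⊥ ∧ c (Fin.last n) = ⊤ ∧ ∀ j : Fin n, PStep (c j.castSucc) (c j.succ)

lemma relindex_mul_card [Group X] {A B : Subgroup X} (h : A ≤ B) :
    A.relIndex B * Nat.card A = Nat.card B := by
  rw [← Nat.card_congr (subgroupOfEquivOfLe h).toEquiv]; exact Subgroup.index_mul_card _

lemma pstep_iff [CommGroup X] [Finite X] (A B : Subgroup X) :
    (A ≤ B ∧ ∃ hN : (A.subgroupOf B).Normal,
      @IsSimpleGroup _ (@QuotientGroup.Quotient.group _ _ _ hN)) ↔ PStep A B := by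
  constructor
  · rintro ⟨hle, hN, hS⟩
    refine ⟨hle, ?_⟩
    have hS' : IsSimpleGroup (↥B ⧸ A.subgroupOf B) := hS
    have := @IsSimpleGroup.prime_card (↥B ⧸ A.subgroupOf B) _ hS'
    rwa [← Subgroup.index_eq_card] at this
  · rintro ⟨hle, hpr⟩
    have : Fact (A.relIndex B).Prime := ⟨hpr⟩
    have hS : IsSimpleGroup (↥B ⧸ A.subgroupOf B) :=
      @isSimpleGroup_of_prime_card (↥B ⧸ A.subgroupOf B) _ _ this
        (Subgroup.index_eq_card _).symm
    exact ⟨hle, inferInstance, hS⟩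

lemma isCompSeries_iff_pchain [CommGroup X] [Finite X] {n : ℕ} (c : Fin (n + 1) → Subgroup X) :
    IsCompSeries c ↔ PChain c := by
  unfold IsCompSeries PChain
  refine and_congr_right fun _ => and_congr_right fun _ => forall_congr' fun j => ?_
  exact pstep_iff _ _

lemma pchain_prod_relindex [Group X] [Finite X] {n : ℕ} {c : Fin (n + 1) → Subgroup X}
    (h : PChain c) :
    ∏ j : Fin n, (c j.castSucc).relIndex (c j.succ) = Nat.card X := by
  obtain ⟨h0, hl, hs⟩ := h
  have key : ∀ k : Fin (n + 1), ∏ j ∈ Finset.univ.filter (fun j : Fin n => (j : ℕ) < (k : ℕ)),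
      (c j.castSucc).relIndex (c j.succ) = (c 0).relIndex (c k) := by
    intro k
    induction k using Fin.induction with
    | zero => simp [Subgroup.relIndex_self]
    | succ m ih =>
      have hset : Finset.univ.filter (fun j : Fin n => (j : ℕ) < ((m.succ : Fin (n+1)) : ℕ)) =
          insert m (Finset.univ.filter (fun j : Fin n => (j : ℕ) < ((m.castSucc : Fin (n+1)) : ℕ))) := by
        ext j
        simp only [Finset.mem_insert, Finset.mem_filter, Finset.mem_univ, true_and,
          Fin.val_succ, Fin.coe_castSucc, Fin.ext_iff]
        omega
      rw [hset, Finset.prod_insert (by simp), ih, mul_comm]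
      exact Subgroup.relIndex_mul_relIndex _ _ _
        (by { rw [h0]; exact bot_le }) (hs m).1
  have hlast := key (Fin.last n)
  have : Finset.univ.filter (fun j : Fin n => (j : ℕ) < ((Fin.last n : Fin (n+1)) : ℕ)) =
      Finset.univ := by
    apply Finset.filter_true_of_mem; intro j _; simpa using j.isLt
  rw [this, h0, hl, Subgroup.relIndex_top_right, Subgroup.index_bot] at hlast
  exact hlast

open ArithmeticFunction ArithmeticFunction.Omega in
lemma omega_prod {ι : Type*} (s : Finset ι) (q : ι → ℕ) (hq : ∀ j ∈ s, q j ≠ 0) :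
    Ω (∏ j ∈ s, q j) = ∑ j ∈ s, Ω (q j) := by
  induction s using Finset.cons_induction with
  | empty => simp
  | cons a s ha ih =>
    rw [Finset.prod_cons, Finset.sum_cons,
      cardFactors_mul (hq a (Finset.mem_cons_self a s))
        (Finset.prod_ne_zero_iff.mpr fun j hj => hq j (Finset.mem_cons_of_mem hj)),
      ih fun j hj => hq j (Finset.mem_cons_of_mem hj)]

open ArithmeticFunction ArithmeticFunction.Omega in
lemma pchain_length [Group X] [Finite X] {n : ℕ} {c : Fin (n + 1) → Subgroup X}
    (h : PChain c) : n = Ω (Nat.card X) := by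
  rw [← pchain_prod_relindex h,
    omega_prod _ _ (fun j _ => (h.2.2 j).2.ne_zero)]
  rw [Finset.sum_congr rfl (fun j _ => cardFactors_apply_prime (h.2.2 j).2)]
  simp



open Finset

section Shuffle

variable {r N : ℕ} {L : Fin r → Type*} (S : ∀ i, L i → L i → Prop) (x y : ∀ i, L i)

/-- number of occurrences of `i` in the word `w`. -/
def cnt (w : Fin N → Fin r) (i : Fin r) : ℕ := (univ.filter fun j => w j = i).card

/-- number of occurrences of `i` in `w` before position `j`. -/
def cntB (w : Fin N → Fin r) (j : Fin (N + 1)) (i : Fin r) : ℕ :=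
  (univ.filter fun j' : Fin N => (j' : ℕ) < (j : ℕ) ∧ w j' = i).card

lemma cntB_le (w : Fin N → Fin r) (j : Fin (N + 1)) (i : Fin r) :
    cntB w j i ≤ cnt w i :=
  card_le_card (by intro j' hj'; simp only [mem_filter] at *; tauto)

lemma cntB_zero (w : Fin N → Fin r) (i : Fin r) : cntB w 0 i = 0 := by
  simp [cntB]

lemma cntB_last (w : Fin N → Fin r) (i : Fin r) : cntB w (Fin.last N) i = cnt w i := by
  unfold cntB cnt
  congr 1
  apply filter_congr
  intro j _
  simp [j.isLt]

lemma cntB_mono (w : Fin N → Fin r) {j j' : Fin (N + 1)} (h : (j : ℕ) ≤ (j' : ℕ)) (i : Fin r) :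
    cntB w j i ≤ cntB w j' i := by
  apply card_le_card
  intro j'' hj''
  simp only [mem_filter, mem_univ, true_and] at *
  exact ⟨by omega, hj''.2⟩

lemma cntB_succ (w : Fin N → Fin r) (j : Fin N) (i : Fin r) :
    cntB w j.succ i = cntB w j.castSucc i + (if w j = i then 1 else 0) := by
  by_cases h : w j = i
  · rw [if_pos h]
    have hins : (univ.filter fun j' : Fin N => (j' : ℕ) < (j.succ : ℕ) ∧ w j' = i) =
        insert j (univ.filter fun j' : Fin N => (j' : ℕ) < (j.castSucc : ℕ) ∧ w j' = i) := by
      ext j'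
      simp only [mem_filter, mem_insert, mem_univ, true_and, Fin.val_succ, Fin.coe_castSucc]
      constructor
      · rintro ⟨hlt, hw⟩
        rcases Nat.lt_succ_iff_lt_or_eq.mp hlt with h' | h'
        · right; exact ⟨h', hw⟩
        · left; exact Fin.ext h'
      · rintro (rfl | ⟨hlt, hw⟩)
        · exact ⟨by omega, h⟩
        · exact ⟨by omega, hw⟩
    rw [cntB, hins, card_insert_of_notMem (by simp)]
    rfl
  · rw [if_neg h, Nat.add_zero]
    unfold cntB
    congr 1
    ext j'
    simp only [mem_filter, mem_univ, true_and, Fin.val_succ, Fin.coe_castSucc]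
    constructor
    · rintro ⟨hlt, hw⟩
      refine ⟨?_, hw⟩
      rcases Nat.lt_succ_iff_lt_or_eq.mp hlt with h' | h'
      · exact h'
      · exact absurd (by rwa [show j' = j from Fin.ext h'] at hw) h
    · rintro ⟨hlt, hw⟩; exact ⟨by omega, hw⟩

lemma nat_ivt {f : ℕ → ℕ} (h0 : f 0 = 0) (hstep : ∀ m, f (m + 1) ≤ f m + 1) :
    ∀ n k, k ≤ f n → ∃ m, m ≤ n ∧ f m = k := by
  intro n
  induction n with
  | zero => intro k hk; exact ⟨0, le_refl 0, by omega⟩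
  | succ n ih =>
    intro k hk
    by_cases h : k ≤ f n
    · obtain ⟨m, hm, hfm⟩ := ih k h
      exact ⟨m, Nat.le_succ_of_le hm, hfm⟩
    · have := hstep n
      exact ⟨n + 1, le_refl _, by omega⟩

lemma exists_cntB (w : Fin N → Fin r) (i : Fin r) {k : ℕ} (hk : k ≤ cnt w i) :
    ∃ j : Fin (N + 1), cntB w j i = k := by
  set f : ℕ → ℕ := fun m => (univ.filter fun j' : Fin N => (j' : ℕ) < m ∧ w j' = i).card with hf
  have h0 : f 0 = 0 := by simp [hf]
  have hstep : ∀ m, f (m + 1) ≤ f m + 1 := by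
    intro m
    have hsub : (univ.filter fun j' : Fin N => (j' : ℕ) < m + 1 ∧ w j' = i) ⊆
        (univ.filter fun j' : Fin N => (j' : ℕ) < m ∧ w j' = i) ∪
        (univ.filter fun j' : Fin N => (j' : ℕ) = m) := by
      intro j' hj'
      simp only [mem_filter, mem_union, mem_univ, true_and] at *
      omega
    calc f (m + 1) ≤ _ := card_le_card hsub
      _ ≤ _ + _ := card_union_le _ _
      _ ≤ f m + 1 := by
        gcongr
        apply card_le_one.mpr
        intro u hu v hv
        simp only [mem_filter, mem_univ, true_and] at hu hv
        exact Fin.ext (hu.trans hv.symm)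
  have hN : f N = cnt w i := by
    show (univ.filter fun j' : Fin N => (j' : ℕ) < N ∧ w j' = i).card = cnt w i
    unfold cnt
    congr 1
    apply filter_congr
    intro j _
    simp [j.isLt]
  obtain ⟨m, hm, hfm⟩ := nat_ivt h0 hstep N k (by omega)
  exact ⟨⟨m, by omega⟩, hfm⟩

lemma exists_occ (w : Fin N → Fin r) (i : Fin r) {k : ℕ} (hk : k < cnt w i) :
    ∃ j : Fin N, w j = i ∧ cntB w j.castSucc i = k ∧ cntB w j.succ i = k + 1 := by
  obtain ⟨j₁, hj₁⟩ := exists_cntB w i (k := k + 1) hk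
  set s := (univ.filter fun j' : Fin N => (j' : ℕ) < (j₁ : ℕ) ∧ w j' = i) with hs
  have hcard : s.card = k + 1 := hj₁
  have hne : s.Nonempty := card_pos.mp (by omega)
  set j₀ := s.max' hne with hj₀
  have hj₀mem : j₀ ∈ s := s.max'_mem hne
  simp only [hs, mem_filter, mem_univ, true_and] at hj₀mem
  have hers : (univ.filter fun j' : Fin N => (j' : ℕ) < (j₀.castSucc : ℕ) ∧ w j' = i) =
      s.erase j₀ := by
    ext j'
    simp only [hs, mem_filter, mem_erase, mem_univ, true_and, Fin.coe_castSucc]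
    constructor
    · rintro ⟨hlt, hw⟩
      exact ⟨fun h => by subst h; omega, by omega, hw⟩
    · rintro ⟨hne', hlt, hw⟩
      have hle := s.le_max' j' (by simp [hs, mem_filter, hlt, hw])
      rw [← hj₀] at hle
      have hle' : (j' : ℕ) ≤ (j₀ : ℕ) := hle
      have hne'' : (j' : ℕ) ≠ (j₀ : ℕ) := fun h => hne' (Fin.ext h)
      exact ⟨by omega, hw⟩
  have h1 : cntB w j₀.castSucc i = k := by
    rw [cntB, hers, card_erase_of_mem (s.max'_mem hne), hcard]
    omega
  refine ⟨j₀, hj₀mem.2, h1, ?_⟩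
  rw [cntB_succ, if_pos hj₀mem.2, h1]

/-- a chain in the `i`-th factor from `x i` to `y i` with steps in `S i`. -/
def FChain (i : Fin r) {m : ℕ} (d : Fin (m + 1) → L i) : Prop :=
  d 0 = x i ∧ d (Fin.last m) = y i ∧ ∀ k : Fin m, S i (d k.castSucc) (d k.succ)

/-- a step in the product: one coordinate does an `S`-step, the others are constant. -/
def MStep (u v : ∀ i, L i) : Prop :=
  ∃ i, S i (u i) (v i) ∧ ∀ k, k ≠ i → u k = v k

/-- a chain in the product from `x` to `y` all of whose steps are `MStep`s. -/
def MChain (γ : Fin (N + 1) → ∀ i, L i) : Prop :=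
  γ 0 = x ∧ γ (Fin.last N) = y ∧ ∀ j : Fin N, MStep S (γ j.castSucc) (γ j.succ)

/-- shuffle data: a word and a chain in each factor. -/
def Shuffled : Type _ :=
  Σ w : Fin N → Fin r, ∀ i, {d : Fin (cnt w i + 1) → L i // FChain S x y i d}

variable {S x y}

/-- assembling a product chain from shuffle data. -/
def build (z : Shuffled (N := N) S x y) : Fin (N + 1) → ∀ i, L i :=
  fun j i => (z.2 i).1 ⟨cntB z.1 j i, Nat.lt_succ_of_le (cntB_le _ _ _)⟩

lemma build_apply (z : Shuffled (N := N) S x y) (j : Fin (N + 1)) (i : Fin r) :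
    build z j i = (z.2 i).1 ⟨cntB z.1 j i, Nat.lt_succ_of_le (cntB_le _ _ _)⟩ := rfl

lemma build_congr (z : Shuffled (N := N) S x y) {j j' : Fin (N + 1)} (i : Fin r)
    (h : cntB z.1 j i = cntB z.1 j' i) : build z j i = build z j' i :=
  congrArg (z.2 i).1 (Fin.ext h)

lemma cntB_succ_self (w : Fin N → Fin r) (j : Fin N) :
    cntB w j.succ (w j) = cntB w j.castSucc (w j) + 1 := by
  have h := cntB_succ w j (w j); rwa [if_pos rfl] at h

lemma cntB_succ_ne (w : Fin N → Fin r) (j : Fin N) {i : Fin r} (h : w j ≠ i) :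
    cntB w j.succ i = cntB w j.castSucc i := by
  have h' := cntB_succ w j i; rwa [if_neg h, Nat.add_zero] at h'

lemma cntB_castSucc_lt (w : Fin N → Fin r) (j : Fin N) :
    cntB w j.castSucc (w j) < cnt w (w j) := by
  have h1 := cntB_succ_self w j
  have h2 := cntB_le w j.succ (w j)
  omega

lemma build_step (z : Shuffled (N := N) S x y) (j : Fin N) :
    S (z.1 j) (build z j.castSucc (z.1 j)) (build z j.succ (z.1 j)) := by
  obtain ⟨w, d⟩ := z
  have hlt : cntB w j.castSucc (w j) < cnt w (w j) := cntB_castSucc_lt w j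
  have hstep := (d (w j)).2.2.2 ⟨cntB w j.castSucc (w j), hlt⟩
  have e1 : (⟨cntB w j.castSucc (w j), hlt⟩ : Fin (cnt w (w j))).castSucc =
      ⟨cntB w j.castSucc (w j), Nat.lt_succ_of_le (cntB_le _ _ _)⟩ := Fin.ext rfl
  have e2 : (⟨cntB w j.castSucc (w j), hlt⟩ : Fin (cnt w (w j))).succ =
      ⟨cntB w j.succ (w j), Nat.lt_succ_of_le (cntB_le _ _ _)⟩ :=
    Fin.ext (by simp [cntB_succ_self w j])
  rw [e1, e2] at hstep
  exact hstep

lemma build_mchain (z : Shuffled (N := N) S x y) : MChain S x y (build z) := by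
  refine ⟨funext fun i => ?_, funext fun i => ?_, fun j => ?_⟩
  · rw [build_apply]
    have h0 : (⟨cntB z.1 0 i, Nat.lt_succ_of_le (cntB_le _ _ _)⟩ : Fin (cnt z.1 i + 1)) = 0 :=
      Fin.ext (by simp [cntB_zero])
    rw [h0]
    exact (z.2 i).2.1
  · rw [build_apply]
    have hl : (⟨cntB z.1 (Fin.last N) i, Nat.lt_succ_of_le (cntB_le _ _ _)⟩ :
        Fin (cnt z.1 i + 1)) = Fin.last (cnt z.1 i) := Fin.ext (by simp [cntB_last])
    rw [hl]
    exact (z.2 i).2.2.1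
  · exact ⟨z.1 j, build_step z j, fun k hk => build_congr z k (cntB_succ_ne z.1 j (fun h => hk h.symm)).symm⟩

variable (hne : ∀ i u v, S i u v → u ≠ v)
include hne

lemma build_injective :
    Function.Injective (build : Shuffled (N := N) S x y → _) := by
  rintro ⟨w, d⟩ ⟨w', d'⟩ h
  have hw : w = w' := by
    funext j
    by_contra hww
    have hchange : build ⟨w, d⟩ j.castSucc (w j) ≠ build ⟨w, d⟩ j.succ (w j) :=
      hne _ _ _ (build_step ⟨w, d⟩ j)
    have hconst : build ⟨w', d'⟩ j.castSucc (w j) = build ⟨w', d'⟩ j.succ (w j) :=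
      build_congr ⟨w', d'⟩ (w j) (cntB_succ_ne w' j (fun hh => hww hh.symm)).symm
    rw [h] at hchange
    exact hchange hconst
  subst hw
  have hd : d = d' := by
    funext i
    apply Subtype.ext
    funext k
    obtain ⟨j, hj⟩ := exists_cntB w i (k := (k : ℕ)) (Nat.lt_succ_iff.mp k.isLt)
    have hk : (⟨cntB w j i, Nat.lt_succ_of_le (cntB_le _ _ _)⟩ : Fin (cnt w i + 1)) = k :=
      Fin.ext hj
    have h1 : (d i).1 k = build ⟨w, d⟩ j i := (congrArg (d i).1 hk).symm
    have h2 : (d' i).1 k = build ⟨w, d'⟩ j i := (congrArg (d' i).1 hk).symm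
    rw [h1, h2, h]
  rw [hd]

lemma build_surjective_aux {γ : Fin (N + 1) → ∀ i, L i} (hγ : MChain S x y γ) :
    ∃ z : Shuffled (N := N) S x y, build z = γ := by
  classical
  obtain ⟨hγ0, hγl, hγs⟩ := hγ
  set w : Fin N → Fin r := fun j => (hγs j).choose with hwdef
  have hwS : ∀ j : Fin N, S (w j) (γ j.castSucc (w j)) (γ j.succ (w j)) :=
    fun j => (hγs j).choose_spec.1
  have hwC : ∀ (j : Fin N) (k : Fin r), k ≠ w j → γ j.castSucc k = γ j.succ k :=
    fun j => (hγs j).choose_spec.2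
  have hconst : ∀ (i : Fin r) (j' j : Fin (N + 1)), (j : ℕ) ≤ (j' : ℕ) →
      cntB w j i = cntB w j' i → γ j i = γ j' i := by
    intro i j'
    induction j' using Fin.induction with
    | zero =>
      intro j hle _
      have hj0 : j = 0 := by
        apply Fin.ext
        simpa using hle
      rw [hj0]
    | succ m ih =>
      intro j hle hcnt
      simp only [Fin.val_succ] at hle
      by_cases hcase : (j : ℕ) = (m : ℕ) + 1
      · have : j = m.succ := Fin.ext (by simpa using hcase)
        rw [this]
      · have hle' : (j : ℕ) ≤ (m.castSucc : ℕ) := by simp; omega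
        have e1 := cntB_mono w (j := j) (j' := m.castSucc) hle' i
        have e2 := cntB_mono w (j := m.castSucc) (j' := m.succ) (by simp) i
        have hwm : w m ≠ i := by
          intro hh
          have := cntB_succ_self w m
          rw [hh] at this
          omega
        have step1 : γ j i = γ m.castSucc i := ih j hle' (by omega)
        have step2 : γ m.castSucc i = γ m.succ i := hwC m i (fun hh => hwm hh.symm)
        rw [step1, step2]
  have hconst' : ∀ (i : Fin r) (j j' : Fin (N + 1)),
      cntB w j i = cntB w j' i → γ j i = γ j' i := by
    intro i j j' hc
    rcases le_total (j : ℕ) (j' : ℕ) with hle | hle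
    · exact hconst i j' j hle hc
    · exact (hconst i j j' hle hc.symm).symm
  refine ⟨⟨w, fun i => ⟨fun k =>
    γ ((exists_cntB w i (Nat.lt_succ_iff.mp k.isLt)).choose) i, ?_, ?_, ?_⟩⟩, ?_⟩
  · -- starts at x i
    beta_reduce
    have hspec := (exists_cntB w i (Nat.lt_succ_iff.mp (0 : Fin (cnt w i + 1)).isLt)).choose_spec
    have : γ ((exists_cntB w i (Nat.lt_succ_iff.mp (0 : Fin (cnt w i + 1)).isLt)).choose) i
        = γ 0 i := hconst' i _ 0 (by rw [hspec, cntB_zero]; rfl)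
    rw [this, hγ0]
  · -- ends at y i
    beta_reduce
    have hspec := (exists_cntB w i
      (Nat.lt_succ_iff.mp (Fin.last (cnt w i)).isLt)).choose_spec
    have : γ ((exists_cntB w i (Nat.lt_succ_iff.mp (Fin.last (cnt w i)).isLt)).choose) i
        = γ (Fin.last N) i := hconst' i _ (Fin.last N) (by rw [hspec, cntB_last]; rfl)
    rw [this, hγl]
  · -- steps
    intro k
    beta_reduce
    obtain ⟨j, hwj, hc1, hc2⟩ := exists_occ w i k.isLt
    have e1 : γ ((exists_cntB w i (Nat.lt_succ_iff.mp k.castSucc.isLt)).choose) i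
        = γ j.castSucc i := by
      apply hconst'
      rw [(exists_cntB w i (Nat.lt_succ_iff.mp k.castSucc.isLt)).choose_spec, hc1]
      rfl
    have e2 : γ ((exists_cntB w i (Nat.lt_succ_iff.mp k.succ.isLt)).choose) i
        = γ j.succ i := by
      apply hconst'
      rw [(exists_cntB w i (Nat.lt_succ_iff.mp k.succ.isLt)).choose_spec, hc2]
      rfl
    rw [e1, e2]
    have := hwS j
    rw [hwj] at this
    exact this
  · -- build equals γ
    funext j i
    show (fun k : Fin (cnt w i + 1) => γ ((exists_cntB w i (Nat.lt_succ_iff.mp k.isLt)).choose) i) ⟨cntB w j i, Nat.lt_succ_of_le (cntB_le _ _ _)⟩ = γ j i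
    beta_reduce
    exact hconst' i _ j
      (exists_cntB w i (Nat.lt_succ_iff.mp (Nat.lt_succ_of_le (cntB_le w j i)))).choose_spec

/-- The shuffle bijection. -/
noncomputable def shuffleEquiv :
    {γ : Fin (N + 1) → ∀ i, L i // MChain S x y γ} ≃ Shuffled (N := N) S x y :=
  (Equiv.ofBijective (fun z => (⟨build z, build_mchain z⟩ : {γ // MChain S x y γ}))
    ⟨fun a b h => build_injective hne (congrArg Subtype.val h),
     fun γ => by
      obtain ⟨z, hz⟩ := build_surjective_aux hne γ.2
      exact ⟨z, Subtype.ext hz⟩⟩).symm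

end Shuffle



open Finset

lemma nat_card_sigma {β : Type*} [Fintype β] (T : β → Type*) [∀ b, Finite (T b)] :
    Nat.card (Σ b, T b) = ∑ b, Nat.card (T b) := by
  letI : ∀ b, Fintype (T b) := fun b => Fintype.ofFinite _
  simp [Nat.card_eq_fintype_card, Fintype.card_sigma]

lemma multinomial_map {β γ : Type*} (s : Finset β) (g : β ↪ γ) (f : γ → ℕ) :
    Nat.multinomial (s.map g) f = Nat.multinomial s (f ∘ g) := by
  unfold Nat.multinomial
  rw [Finset.sum_map, Finset.prod_map]
  rfl

/-- The fibers of the "fiber of 0" map. -/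
def fiberEquiv (r : ℕ) (a : Fin (r + 1) → ℕ) (α : Type*) [Fintype α] [DecidableEq α]
    (s : Finset α) (hs : s.card = a 0) :
    {w : {w : α → Fin (r + 1) // ∀ i, (univ.filter fun x => w x = i).card = a i} //
        univ.filter (fun x => w.1 x = 0) = s} ≃
    {v : {x : α // x ∉ s} → Fin r // ∀ i, (univ.filter fun x => v x = i).card = a i.succ} where
  toFun w := ⟨fun x => (w.1.1 x.1).pred (by
      intro h0
      have hmem : ↑x ∈ univ.filter (fun x => w.1.1 x = 0) := by simp [h0]
      rw [w.2] at hmem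
      exact x.2 hmem), by
    intro i
    rw [← w.1.2 i.succ]
    refine Finset.card_bij (fun x _ => x.1) ?_ ?_ ?_
    · intro x hx
      simp only [mem_filter, mem_univ, true_and] at hx ⊢
      rw [← hx, Fin.succ_pred]
    · intro x _ y _ h
      exact Subtype.ext h
    · intro b hb
      simp only [mem_filter, mem_univ, true_and] at hb
      have hbs : b ∉ s := by
        intro hmem
        have h2 : b ∈ univ.filter (fun x => w.1.1 x = 0) := by rw [w.2]; exact hmem
        simp only [mem_filter, mem_univ, true_and] at h2
        rw [hb] at h2
        exact Fin.succ_ne_zero i h2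
      refine ⟨⟨b, hbs⟩, ?_, rfl⟩
      simp only [mem_filter, mem_univ, true_and]
      apply Fin.succ_injective
      rw [Fin.succ_pred, hb]⟩
  invFun v := ⟨⟨fun x => if h : x ∈ s then 0 else (v.1 ⟨x, h⟩).succ, by
    intro i
    induction i using Fin.cases with
    | zero =>
      have hf : (univ.filter fun x =>
          (if h : x ∈ s then (0 : Fin (r+1)) else (v.1 ⟨x, h⟩).succ) = 0) = s := by
        ext x
        by_cases h : x ∈ s <;> simp [h, Fin.succ_ne_zero]
      rw [hf, hs]
    | succ i =>
      rw [← v.2 i]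
      refine Finset.card_bij (fun x hx => ⟨x, ?_⟩) ?_ ?_ ?_
      · intro hmem
        simp only [mem_filter, mem_univ, true_and, dif_pos hmem] at hx
        exact Fin.succ_ne_zero i hx.symm
      · intro x hx
        simp only [mem_filter, mem_univ, true_and] at hx ⊢
        rw [dif_neg] at hx
        exact Fin.succ_injective _ hx
        exact fun hmem => Fin.succ_ne_zero i (by simpa [hmem] using hx.symm)
      · intro x₁ _ x₂ _ h
        exact congrArg Subtype.val h
      · intro b hb
        simp only [mem_filter, mem_univ, true_and] at hb
        refine ⟨b.1, ?_, Subtype.ext rfl⟩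
        simp only [mem_filter, mem_univ, true_and, dif_neg b.2, hb]⟩, by
    ext x
    by_cases h : x ∈ s <;> simp [h, Fin.succ_ne_zero]⟩
  left_inv w := by
    apply Subtype.ext; apply Subtype.ext
    funext x
    by_cases h : x ∈ s
    · have hw0 : w.1.1 x = 0 := by
        have hmem := h
        rw [← w.2] at hmem
        simpa using hmem
      simp [h, hw0]
    · simp only [dif_neg h, Fin.succ_pred]
  right_inv v := by
    apply Subtype.ext
    funext x
    apply Fin.succ_injective
    rw [Fin.succ_pred]
    simp only [dif_neg x.2]

lemma card_words : ∀ (r : ℕ) (a : Fin r → ℕ) (α : Type) [Fintype α] [DecidableEq α],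
    Fintype.card α = ∑ i, a i →
    Nat.card {w : α → Fin r // ∀ i, (univ.filter fun x => w x = i).card = a i} =
      Nat.multinomial univ a := by
  intro r
  induction r with
  | zero =>
    intro a α _ _ hcard
    haveI : IsEmpty α := Fintype.card_eq_zero_iff.mp (by simpa using hcard)
    haveI : Unique {w : α → Fin 0 // ∀ i, (univ.filter fun x => w x = i).card = a i} :=
      ⟨⟨⟨fun x => isEmptyElim x, fun i => Fin.elim0 i⟩⟩,
        fun w => Subtype.ext (funext fun x => isEmptyElim x)⟩
    rw [Nat.card_unique]
    simp [Finset.univ_eq_empty]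
  | succ r ih =>
    intro a α _ _ hcard
    classical
    set F : {w : α → Fin (r + 1) // ∀ i, (univ.filter fun x => w x = i).card = a i} →
        {s : Finset α // s.card = a 0} :=
      fun w => ⟨univ.filter (fun x => w.1 x = 0), w.2 0⟩ with hF
    rw [← Nat.card_congr (Equiv.sigmaFiberEquiv F), nat_card_sigma]
    have hsum : ∑ i : Fin r, a i.succ + a 0 = Fintype.card α := by
      rw [hcard, Fin.sum_univ_succ]
      omega
    have hfib : ∀ s : {s : Finset α // s.card = a 0},
        Nat.card {w // F w = s} = Nat.multinomial univ (fun i : Fin r => a i.succ) := by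
      intro s
      have hsubcard : Fintype.card {x : α // x ∉ s.1} = ∑ i : Fin r, a i.succ := by
        rw [Fintype.card_subtype]
        have h1 : univ.filter (fun x => x ∈ s.1) = s.1 := by ext x; simp
        have h2 : (univ.filter fun x => x ∉ s.1) = univ \ s.1 := by
          ext x; simp
        rw [h2, Finset.card_sdiff_of_subset (Finset.subset_univ _), Finset.card_univ]
        have := s.2
        omega
      have hIH := ih (fun i : Fin r => a i.succ) {x : α // x ∉ s.1} hsubcard
      rw [← hIH]
      apply Nat.card_congr
      exact (Equiv.subtypeEquivRight (fun w => by rw [Subtype.ext_iff])).trans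
        (fiberEquiv r a α s.1 s.2)
    rw [Finset.sum_congr rfl (fun s _ => hfib s), Finset.sum_const, smul_eq_mul,
      Finset.card_univ]
    have hcards : Fintype.card {s : Finset α // s.card = a 0} =
        (Fintype.card α).choose (a 0) := by
      rw [Fintype.card_subtype]
      have : univ.filter (fun s : Finset α => s.card = a 0) = Finset.powersetCard (a 0) univ := by
        rw [Finset.powersetCard_eq_filter, Finset.powerset_univ]
      rw [this, Finset.card_powersetCard, Finset.card_univ]
    rw [hcards]
    -- now the multinomial recursion
    have huniv := Fin.univ_succ (n := r)
    rw [huniv, Nat.multinomial_cons, multinomial_map]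
    have h3 : a 0 + ∑ i ∈ univ.map ⟨Fin.succ, Fin.succ_injective r⟩, a i = Fintype.card α := by
      rw [Finset.sum_map]
      simp only [Function.Embedding.coeFn_mk]
      omega
    rw [h3]
    rfl


section Count

open Finset

variable {r N : ℕ} {L : Fin r → Type*} [∀ i, Finite (L i)]
  {S : ∀ i, L i → L i → Prop} {x y : ∀ i, L i}

lemma card_shuffled (a : Fin r → ℕ)
    (hlen : ∀ (i : Fin r) (m : ℕ) (d : Fin (m + 1) → L i), FChain S x y i d → m = a i) :
    Nat.card (Shuffled (N := N) S x y) =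
      Nat.card {w : Fin N → Fin r // ∀ i, cnt w i = a i} *
        ∏ i, Nat.card {d : Fin (a i + 1) → L i // FChain S x y i d} := by
  classical
  rw [show Shuffled (N := N) S x y =
    Σ w : Fin N → Fin r, ∀ i, {d : Fin (cnt w i + 1) → L i // FChain S x y i d} from rfl,
    nat_card_sigma]
  have hterm : ∀ w : Fin N → Fin r,
      Nat.card (∀ i, {d : Fin (cnt w i + 1) → L i // FChain S x y i d}) =
      if ∀ i, cnt w i = a i
      then ∏ i, Nat.card {d : Fin (a i + 1) → L i // FChain S x y i d} else 0 := by
    intro w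
    by_cases h : ∀ i, cnt w i = a i
    · rw [if_pos h, Nat.card_pi]
      exact Finset.prod_congr rfl fun i _ =>
        congrArg (fun m => Nat.card {d : Fin (m + 1) → L i // FChain S x y i d}) (h i)
    · rw [if_neg h]
      push_neg at h
      obtain ⟨i, hi⟩ := h
      haveI : IsEmpty {d : Fin (cnt w i + 1) → L i // FChain S x y i d} :=
        ⟨fun d => hi (hlen i _ d.1 d.2)⟩
      haveI : IsEmpty (∀ i, {d : Fin (cnt w i + 1) → L i // FChain S x y i d}) :=
        ⟨fun f => (this.false (f i))⟩
      exact Nat.card_of_isEmpty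
  rw [Finset.sum_congr rfl fun w _ => hterm w, ← Finset.sum_filter, Finset.sum_const,
    smul_eq_mul, Nat.card_eq_fintype_card, Fintype.card_subtype]

end Count

section PiLattice

open Subgroup Finset

variable {r : ℕ} {H : Fin r → Type*} [∀ i, CommGroup (H i)] [∀ i, Finite (H i)]

lemma mulSingle_mem_pi (B : ∀ i, Subgroup (H i)) (i : Fin r) (b : H i) (hb : b ∈ B i) :
    Pi.mulSingle i b ∈ Subgroup.pi Set.univ B := by
  rw [Subgroup.mem_pi]
  intro j _
  by_cases hj : j = i
  · subst hj; rw [Pi.mulSingle_eq_same]; exact hb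
  · rw [Pi.mulSingle_eq_of_ne hj]; exact one_mem _

variable (hcop : Pairwise fun i j => Nat.Coprime (Nat.card (H i)) (Nat.card (H j)))
include hcop

lemma mulSingle_mem_of_mem (K : Subgroup (∀ i, H i)) (k : ∀ i, H i) (hk : k ∈ K) (i : Fin r) :
    Pi.mulSingle i (k i) ∈ K := by
  classical
  set q : ℕ := ∏ j ∈ univ.erase i, Nat.card (H j) with hq
  have hcop' : (q : ℕ).Coprime (Nat.card (H i)) :=
    Nat.Coprime.prod_left fun j hj => hcop (Finset.ne_of_mem_erase hj)
  set A := Nat.gcdA q (Nat.card (H i)) with hA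
  set Bz := Nat.gcdB q (Nat.card (H i)) with hB
  have hbez : (1 : ℤ) = q * A + (Nat.card (H i)) * Bz := by
    have := Nat.gcd_eq_gcd_ab q (Nat.card (H i))
    rwa [Nat.Coprime.gcd_eq_one hcop', Nat.cast_one] at this
  have hgK : k ^ ((q : ℤ) * A) ∈ K := K.zpow_mem hk _
  have heq : k ^ ((q : ℤ) * A) = Pi.mulSingle i (k i) := by
    funext j
    have hgj : (k ^ ((q : ℤ) * A)) j = (k j) ^ ((q : ℤ) * A) := rfl
    by_cases hj : j = i
    · subst hj
      rw [hgj, Pi.mulSingle_eq_same]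
      have h1 : (q : ℤ) * A = 1 - (Nat.card (H j)) * Bz := by omega
      rw [h1, zpow_sub, zpow_one, zpow_mul, zpow_natCast, pow_card_eq_one', one_zpow, inv_one, mul_one]
    · rw [hgj, Pi.mulSingle_eq_of_ne hj]
      have hdvd : (Nat.card (H j)) ∣ q :=
        Finset.dvd_prod_of_mem _ (Finset.mem_erase.mpr ⟨hj, mem_univ j⟩)
      obtain ⟨t, ht⟩ := hdvd
      rw [show (q : ℤ) * A = (Nat.card (H j)) * (t * A) by rw [ht]; push_cast; ring,
        zpow_mul, zpow_natCast, pow_card_eq_one', one_zpow]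
  rw [← heq]
  exact hgK

lemma pi_eval_eq (K : Subgroup (∀ i, H i)) :
    Subgroup.pi Set.univ (fun i => K.map (Pi.evalMonoidHom H i)) = K := by
  apply le_antisymm
  · intro x hx
    rw [Subgroup.mem_pi] at hx
    have hsingle : ∀ i, Pi.mulSingle i (x i) ∈ K := by
      intro i
      obtain ⟨k, hkK, hki⟩ := hx i (Set.mem_univ i)
      have := mulSingle_mem_of_mem hcop K k hkK i
      rwa [show k i = x i from hki] at this
    have hx' : x = ∏ i, Pi.mulSingle i (x i) := by
      symm
      exact Finset.univ_prod_mulSingle x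
    rw [hx']
    exact Subgroup.prod_mem K fun i _ => hsingle i
  · intro x hx
    rw [Subgroup.mem_pi]
    intro i _
    exact ⟨x, hx, rfl⟩

omit hcop in
lemma eval_pi_eq (B : ∀ i, Subgroup (H i)) (i : Fin r) :
    (Subgroup.pi Set.univ B).map (Pi.evalMonoidHom H i) = B i := by
  apply le_antisymm
  · rintro _ ⟨k, hk, rfl⟩
    exact ((Subgroup.mem_pi _).mp hk) i (Set.mem_univ i)
  · intro b hb
    exact ⟨Pi.mulSingle i b, mulSingle_mem_pi B i b hb, Pi.mulSingle_eq_same i b⟩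

/-- with coprime factors, the subgroup lattice of the product is the product of the lattices. -/
noncomputable def latticeEquiv : Subgroup (∀ i, H i) ≃o ∀ i, Subgroup (H i) :=
  Equiv.toOrderIso
    ⟨fun K i => K.map (Pi.evalMonoidHom H i), fun B => Subgroup.pi Set.univ B,
     fun K => pi_eval_eq hcop K, fun B => funext fun i => eval_pi_eq B i⟩
    (fun K K' h i => Subgroup.map_mono h)
    (fun B B' h x hx => (Subgroup.mem_pi _).mpr fun i hi => h i (((Subgroup.mem_pi _).mp hx) i hi))

lemma latticeEquiv_symm_apply (B : ∀ i, Subgroup (H i)) :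
    (latticeEquiv hcop).symm B = Subgroup.pi Set.univ B := rfl

omit hcop in
lemma card_pi_subgroup (B : ∀ i, Subgroup (H i)) :
    Nat.card (Subgroup.pi Set.univ B) = ∏ i, Nat.card (B i) := by
  rw [← Nat.card_pi]
  apply Nat.card_congr
  exact
    { toFun := fun x i => ⟨x.1 i, ((Subgroup.mem_pi _).mp x.2) i (Set.mem_univ i)⟩
      invFun := fun f => ⟨fun i => (f i).1, (Subgroup.mem_pi _).mpr fun i _ => (f i).2⟩
      left_inv := fun x => rfl
      right_inv := fun f => rfl }

omit hcop in
lemma pi_le_pi_iff {A B : ∀ i, Subgroup (H i)} :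
    Subgroup.pi Set.univ A ≤ Subgroup.pi Set.univ B ↔ ∀ i, A i ≤ B i := by
  constructor
  · intro h i a ha
    have := h (mulSingle_mem_pi A i a ha)
    have h2 := ((Subgroup.mem_pi _).mp this) i (Set.mem_univ i)
    rwa [Pi.mulSingle_eq_same] at h2
  · intro h x hx
    exact (Subgroup.mem_pi _).mpr fun i hi => h i (((Subgroup.mem_pi _).mp hx) i hi)

omit hcop in
lemma relindex_pi {A B : ∀ i, Subgroup (H i)} (h : ∀ i, A i ≤ B i) :
    (Subgroup.pi Set.univ A).relIndex (Subgroup.pi Set.univ B) = ∏ i, (A i).relIndex (B i) := by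
  have hle : Subgroup.pi Set.univ A ≤ Subgroup.pi Set.univ B := pi_le_pi_iff.mpr h
  have h1 := relindex_mul_card hle
  rw [card_pi_subgroup, card_pi_subgroup] at h1
  have h2 : (∏ i, (A i).relIndex (B i)) * ∏ i, Nat.card (A i) = ∏ i, Nat.card (B i) := by
    rw [← Finset.prod_mul_distrib]
    exact Finset.prod_congr rfl fun i _ => relindex_mul_card (h i)
  have hpos : 0 < ∏ i, Nat.card (A i) := Finset.prod_pos fun i _ => Nat.card_pos
  exact Nat.eq_of_mul_eq_mul_right hpos (h1.trans h2.symm)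

omit hcop in
lemma prime_prod {f : Fin r → ℕ} (hpr : (∏ i, f i).Prime) :
    ∃ i, (f i).Prime ∧ ∀ j, j ≠ i → f j = 1 := by
  have hne : ∃ i, f i ≠ 1 := by
    by_contra h
    push_neg at h
    rw [Finset.prod_eq_one (fun i _ => h i)] at hpr
    exact Nat.not_prime_one hpr
  obtain ⟨i, hi⟩ := hne
  have hdvd : f i ∣ ∏ j, f j := Finset.dvd_prod_of_mem f (mem_univ i)
  rcases hpr.eq_one_or_self_of_dvd (f i) hdvd with h1 | h1
  · exact absurd h1 hi
  have hrest : ∏ j ∈ univ.erase i, f j = 1 := by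
    have hmul := Finset.mul_prod_erase univ f (mem_univ i)
    rw [h1] at hmul
    have hpos : 0 < ∏ j, f j := hpr.pos
    nth_rewrite 2 [← mul_one (∏ j, f j)] at hmul
    exact Nat.eq_of_mul_eq_mul_left hpos hmul
  refine ⟨i, h1 ▸ hpr, fun j hj => ?_⟩
  have hd2 : f j ∣ ∏ j ∈ univ.erase i, f j :=
    Finset.dvd_prod_of_mem f (Finset.mem_erase.mpr ⟨hj, mem_univ j⟩)
  rw [hrest] at hd2
  exact Nat.dvd_one.mp hd2

omit hcop in
lemma pstep_pi {u v : ∀ i, Subgroup (H i)} :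
    PStep (Subgroup.pi Set.univ u) (Subgroup.pi Set.univ v) ↔
      MStep (fun i => PStep (X := H i)) u v := by
  constructor
  · rintro ⟨hle, hpr⟩
    have hle' : ∀ i, u i ≤ v i := pi_le_pi_iff.mp hle
    rw [relindex_pi hle'] at hpr
    obtain ⟨i, hip, hione⟩ := prime_prod hpr
    refine ⟨i, ⟨hle' i, hip⟩, fun k hk => ?_⟩
    exact le_antisymm (hle' k) (Subgroup.relIndex_eq_one.mp (hione k hk))
  · rintro ⟨i, ⟨hlei, hpri⟩, hconst⟩
    have hle' : ∀ k, u k ≤ v k := fun k => by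
      by_cases h : k = i
      · subst h; exact hlei
      · exact (hconst k h).le
    refine ⟨pi_le_pi_iff.mpr hle', ?_⟩
    rw [relindex_pi hle',
      Finset.prod_eq_single i
        (fun k _ hk => Subgroup.relIndex_eq_one.mpr (hconst k hk).ge) (by simp)]
    exact hpri

lemma pchain_iff_mchain {N : ℕ} (c : Fin (N + 1) → Subgroup (∀ i, H i)) :
    PChain c ↔ MChain (fun i => PStep (X := H i)) (fun _ => ⊥) (fun _ => ⊤)
      (fun j => latticeEquiv hcop (c j)) := by
  set e := latticeEquiv hcop with he
  have hbot : (e ⊥ : ∀ i, Subgroup (H i)) = fun _ => ⊥ := e.map_bot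
  have htop : (e ⊤ : ∀ i, Subgroup (H i)) = fun _ => ⊤ := e.map_top
  have hstep : ∀ K K' : Subgroup (∀ i, H i), PStep K K' ↔
      MStep (fun i => PStep (X := H i)) (e K) (e K') := by
    intro K K'
    have h1 : Subgroup.pi Set.univ (e K) = K := e.symm_apply_apply K
    have h2 : Subgroup.pi Set.univ (e K') = K' := e.symm_apply_apply K'
    have key := pstep_pi (H := H) (u := e K) (v := e K')
    rw [h1, h2] at key
    exact key
  unfold PChain MChain
  refine and_congr ?_ (and_congr ?_ ?_)
  · exact ⟨fun h => by show e (c 0) = _; rw [h, hbot],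
      fun h => e.injective (by rw [hbot]; exact h)⟩
  · exact ⟨fun h => by show e (c (Fin.last N)) = _; rw [h, htop],
      fun h => e.injective (by rw [htop]; exact h)⟩
  · exact forall_congr' fun j => hstep _ _

end PiLattice

section Main

open Subgroup Finset ArithmeticFunction ArithmeticFunction.Omega

def sigmaCollapse {T : ℕ → Type*} (N : ℕ) (h : ∀ n, T n → n = N) : (Σ n, T n) ≃ T N where
  toFun x := (h x.1 x.2) ▸ x.2
  invFun t := ⟨N, t⟩
  left_inv := by rintro ⟨n, t⟩; have hn := h n t; subst hn; rfl
  right_inv := by intro t; rfl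

lemma csCount_eq (X : Type*) [CommGroup X] [Finite X] :
    csCount X = Nat.card {c : Fin (Ω (Nat.card X) + 1) → Subgroup X // PChain c} := by
  unfold csCount
  have hcol := sigmaCollapse (T := fun n => {c : Fin (n + 1) → Subgroup X // IsCompSeries c})
    (Ω (Nat.card X)) (fun n t => pchain_length ((isCompSeries_iff_pchain t.1).mp t.2))
  rw [Nat.card_congr hcol]
  exact Nat.card_congr (Equiv.subtypeEquivRight fun c => isCompSeries_iff_pchain c)

lemma pstep_ne {X : Type*} [Group X] {u v : Subgroup X} (h : PStep u v) : u ≠ v := by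
  intro huv
  have h2 := h.2
  rw [huv, Subgroup.relIndex_self] at h2
  exact Nat.not_prime_one h2

lemma csCount_pi {r : ℕ} (H : Fin r → Type*) [∀ i, CommGroup (H i)] [∀ i, Finite (H i)]
    (p a : Fin r → ℕ) (hp : ∀ i, (p i).Prime)
    (hcop : Pairwise fun i j => Nat.Coprime (Nat.card (H i)) (Nat.card (H j)))
    (hcards : ∀ i, Nat.card (H i) = p i ^ a i) :
    csCount (∀ i, H i) = (∏ i, csCount (H i)) * Nat.multinomial Finset.univ a := by
  classical
  have hΩi : ∀ i, Ω (Nat.card (H i)) = a i := fun i => by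
    rw [hcards i]; exact cardFactors_apply_prime_pow (hp i)
  have hcardpi : Nat.card (∀ i, H i) = ∏ i, p i ^ a i := by
    rw [Nat.card_pi]; exact Finset.prod_congr rfl fun i _ => hcards i
  have hΩ : Ω (Nat.card (∀ i, H i)) = ∑ i, a i := by
    rw [hcardpi, omega_prod _ _ (fun i _ => pow_ne_zero _ (hp i).ne_zero)]
    exact Finset.sum_congr rfl fun i _ => cardFactors_apply_prime_pow (hp i)
  rw [csCount_eq]
  set N := Ω (Nat.card (∀ i, H i)) with hN
  have e1 : {c : Fin (N + 1) → Subgroup (∀ i, H i) // PChain c} ≃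
      {γ : Fin (N + 1) → ∀ i, Subgroup (H i) //
        MChain (fun i => PStep (X := H i)) (fun _ => ⊥) (fun _ => ⊤) γ} :=
    (Equiv.piCongrRight fun _ : Fin (N + 1) => (latticeEquiv hcop).toEquiv).subtypeEquiv
      (fun c => pchain_iff_mchain hcop c)
  have hne : ∀ (i : Fin r) (u v : Subgroup (H i)), PStep u v → u ≠ v :=
    fun i u v h => pstep_ne h
  rw [Nat.card_congr e1, Nat.card_congr (shuffleEquiv hne),
    card_shuffled a (fun i m d hd => (pchain_length ⟨hd.1, hd.2.1, hd.2.2⟩).trans (hΩi i))]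
  have hw : Nat.card {w : Fin N → Fin r // ∀ i, cnt w i = a i} = Nat.multinomial univ a := by
    have hcf : Fintype.card (Fin N) = ∑ i, a i := by rw [Fintype.card_fin]; exact hΩ
    exact card_words r a (Fin N) hcf
  have hci : ∀ i : Fin r, Nat.card {d : Fin (a i + 1) → Subgroup (H i) //
      FChain (fun i => PStep (X := H i)) (fun _ => ⊥) (fun _ => ⊤) i d} = csCount (H i) := by
    intro i
    rw [csCount_eq (H i), hΩi i]
    exact Nat.card_congr (Equiv.subtypeEquivRight fun d =>
      ⟨fun hd => ⟨hd.1, hd.2.1, hd.2.2⟩, fun hd => ⟨hd.1, hd.2.1, hd.2.2⟩⟩)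
  rw [hw, Finset.prod_congr rfl (fun i _ => hci i), mul_comm]

section Transport

open Subgroup

variable {X Y : Type*} [Group X] [Group Y] [Finite X] (e : X ≃* Y)

lemma card_map_equiv (A : Subgroup X) : Nat.card (A.map e.toMonoidHom) = Nat.card A :=
  (Nat.card_congr (Subgroup.equivMapOfInjective A e.toMonoidHom e.injective).toEquiv).symm

lemma relindex_map_equiv {A B : Subgroup X} (h : A ≤ B) :
    (A.map e.toMonoidHom).relIndex (B.map e.toMonoidHom) = A.relIndex B := by
  have hle : A.map e.toMonoidHom ≤ B.map e.toMonoidHom := Subgroup.map_mono h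
  have h1 := relindex_mul_card hle
  rw [card_map_equiv, card_map_equiv] at h1
  have h2 := relindex_mul_card h
  have hpos : 0 < Nat.card A := Nat.card_pos
  exact Nat.eq_of_mul_eq_mul_right hpos (h1.trans h2.symm)

lemma map_equiv_top : (⊤ : Subgroup X).map e.toMonoidHom = ⊤ := by
  rw [← MonoidHom.range_eq_map]
  exact MonoidHom.range_eq_top.mpr e.surjective

lemma pchain_map {N : ℕ} {c : Fin (N + 1) → Subgroup X} (hc : PChain c) :
    PChain (fun j => (c j).map e.toMonoidHom) := by
  refine ⟨?_, ?_, fun j => ?_⟩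
  · show (c 0).map e.toMonoidHom = ⊥
    rw [hc.1, Subgroup.map_bot]
  · show (c (Fin.last N)).map e.toMonoidHom = ⊤
    rw [hc.2.1, map_equiv_top]
  · exact ⟨Subgroup.map_mono (hc.2.2 j).1,
      (relindex_map_equiv e (hc.2.2 j).1).symm ▸ (hc.2.2 j).2⟩

lemma map_equiv_inv (K : Subgroup X) :
    (K.map e.toMonoidHom).map e.symm.toMonoidHom = K := by
  rw [Subgroup.map_map]
  have hcomp : e.symm.toMonoidHom.comp e.toMonoidHom = MonoidHom.id X :=
    MonoidHom.ext fun x => e.symm_apply_apply x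
  rw [hcomp, Subgroup.map_id]

end Transport

lemma csCount_congr {X Y : Type*} [CommGroup X] [CommGroup Y] [Finite X] [Finite Y]
    (e : X ≃* Y) : csCount X = csCount Y := by
  haveI : Finite Y := Finite.of_equiv X e.toEquiv
  rw [csCount_eq X, csCount_eq Y]
  have hc : Nat.card Y = Nat.card X := (Nat.card_congr e.toEquiv).symm
  rw [hc]
  apply Nat.card_congr
  refine ⟨fun c => ⟨fun j => (c.1 j).map e.toMonoidHom, pchain_map e c.2⟩,
    fun c => ⟨fun j => (c.1 j).map e.symm.toMonoidHom, pchain_map e.symm c.2⟩, ?_, ?_⟩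
  · intro c
    apply Subtype.ext
    funext j
    exact map_equiv_inv e (c.1 j)
  · intro c
    apply Subtype.ext
    funext j
    have := map_equiv_inv e.symm (c.1 j)
    rwa [e.symm_symm] at this

end Main

end CS


theorem csCount_of_abelian_eq_prod_sylow_csCount (G : Type*) [CommGroup G] [Finite G]
    (r : ℕ) (p a : Fin r → ℕ) (hp : ∀ i, (p i).Prime) (hinj : Function.Injective p)
    (ha : ∀ i, 1 ≤ a i) (hcard : Nat.card G = ∏ i, p i ^ a i)
    (P : ∀ i, Sylow (p i) G) (t : Fin r → ℕ)
    (ht : ∀ i, t i = csCount ((P i : Subgroup G) : Type _)) :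
    csCount G = (∏ i, t i) * Nat.multinomial Finset.univ a := by
  classical
  haveI : ∀ i, Fact (p i).Prime := fun i => ⟨hp i⟩
  have hfact : ∀ i, (Nat.card G).factorization (p i) = a i := by
    intro i
    rw [hcard, Nat.factorization_prod (fun j _ => pow_ne_zero _ (hp j).ne_zero)]
    rw [Finsupp.finset_sum_apply]
    rw [Finset.sum_eq_single i
      (fun j _ hj => by
        rw [(hp j).factorization_pow, Finsupp.single_eq_of_ne (fun h => hj (hinj h).symm)])
      (by simp)]
    rw [(hp i).factorization_pow, Finsupp.single_eq_same]
  have hcardP : ∀ i, Nat.card (↥(P i : Subgroup G)) = p i ^ a i := fun i => by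
    rw [Sylow.card_eq_multiplicity, hfact i]
  have hcop : Pairwise fun i j =>
      Nat.Coprime (Nat.card (↥(P i : Subgroup G))) (Nat.card (↥(P j : Subgroup G))) := by
    intro i j hij
    rw [hcardP i, hcardP j]
    exact Nat.Coprime.pow _ _ ((Nat.coprime_primes (hp i) (hp j)).mpr (fun h => hij (hinj h)))
  letI : ∀ i, Fintype (↥(P i : Subgroup G)) := fun i => Fintype.ofFinite _
  have hcomm : Pairwise fun i j : Fin r => ∀ x y : G,
      x ∈ (P i : Subgroup G) → y ∈ (P j : Subgroup G) → Commute x y :=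
    fun i j _ x y _ _ => mul_comm x y
  have hind := Subgroup.independent_of_coprime_order hcomm (fun i j hij => by
    beta_reduce
    rw [← Nat.card_eq_fintype_card, ← Nat.card_eq_fintype_card]
    exact hcop hij)
  have hinj2 := Subgroup.injective_noncommPiCoprod_of_iSupIndep (hcomm := hcomm) hind
  have hbij : Function.Bijective (Subgroup.noncommPiCoprod hcomm) := by
    rw [Nat.bijective_iff_injective_and_card]
    refine ⟨hinj2, ?_⟩
    rw [Nat.card_pi, hcard]
    exact Finset.prod_congr rfl fun i _ => hcardP i
  have e : (∀ i, ↥(P i : Subgroup G)) ≃* G := MulEquiv.ofBijective _ hbij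
  rw [← CS.csCount_congr e, CS.csCount_pi _ p a hp hcop hcardP,
    Finset.prod_congr rfl fun i _ => (ht i).symm]
end

section
/- For every integer n ≥ 4 and every odd prime p, the inequality 2^{⌊log_2 n⌋} − 1 > (p^{⌊log_p n⌋} − 1)/(p − 1) holds. -/
theorem two_pow_log_sub_one_gt (n p : ℕ) (hn : 4 ≤ n) (hp : p.Prime) (hodd : Odd p) :
    2 ^ Nat.log 2 n - 1 > (p ^ Nat.log p n - 1) / (p - 1) := by
  have hpe : p % 2 = 1 := Nat.odd_iff.mp hodd
  have hp3 : 3 ≤ p := by have := hp.two_le; omega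
  set k := Nat.log 2 n with hk
  set m := Nat.log p n with hm
  have h1 : 2 ^ k ≤ n := Nat.pow_log_le_self 2 (by omega)
  have h2 : n < 2 ^ (k + 1) := Nat.lt_pow_succ_log_self (by norm_num) n
  have h3 : p ^ m ≤ n := Nat.pow_log_le_self p (by omega)
  have hk2 : 2 ≤ k := by
    have h4 : 2 ^ 2 ≤ n := by omega
    exact (Nat.le_log_iff_pow_le (by norm_num) (by omega)).mpr h4
  have h2k : 4 ≤ 2 ^ k := by
    calc (4:ℕ) = 2 ^ 2 := rfl
    _ ≤ 2 ^ k := Nat.pow_le_pow_right (by norm_num) hk2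
  have hpow2 : 2 ^ (k + 1) = 2 * 2 ^ k := by ring
  rw [gt_iff_lt, Nat.div_lt_iff_lt_mul (by omega)]
  by_cases hp3' : p = 3
  · subst hp3'
    have hne : 3 ^ m ≠ 2 ^ (k + 1) - 1 := by
      intro heq
      have h8 : (8:ℕ) ∣ 2 ^ (k + 1) := by
        refine ⟨2 ^ (k - 2), ?_⟩
        rw [show k + 1 = 3 + (k - 2) by omega, pow_add]
        norm_num
      have hmod : 3 ^ m % 8 = 3 ^ (m % 2) % 8 := by
        conv_lhs => rw [← Nat.div_add_mod m 2]
        rw [pow_add, pow_mul, Nat.mul_mod, Nat.pow_mod]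
        norm_num
      obtain ⟨t, ht⟩ := h8
      rcases Nat.mod_two_eq_zero_or_one m with h | h <;> rw [h] at hmod <;>
        simp at hmod <;> omega
    omega
  · have hp5 : 5 ≤ p := by omega
    have key : p ^ m - 1 < (2 ^ k - 1) * 4 := by
      have : p ^ m < 2 ^ (k + 1) := lt_of_le_of_lt h3 h2
      omega
    exact lt_of_lt_of_le key (Nat.mul_le_mul_left _ (by omega))
end

section
/- For every integer n ≥ 4 and every odd prime p, ∏_{i=1}^{⌊log_2 n⌋} (2^i − 1) > ∏_{i=1}^{⌊log_p n⌋} (p^i − 1)/(p − 1). -/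
open Finset

lemma sum_Icc_pred (a : ℕ) : 2 * ∑ i ∈ Icc 1 a, (i - 1) = a * (a - 1) := by
  induction a with
  | zero => simp
  | succ k ih =>
    rw [Finset.sum_Icc_succ_top (by omega), Nat.mul_add, ih]
    cases k with
    | zero => simp
    | succ m => simp only [Nat.add_sub_cancel, Nat.succ_sub_one]; ring

lemma sum_Icc_id' (b : ℕ) : 2 * ∑ i ∈ Icc 1 b, i = b * (b + 1) := by
  induction b with
  | zero => simp
  | succ k ih =>
    rw [Finset.sum_Icc_succ_top (by omega), Nat.mul_add, ih]
    ring

lemma lhs_ge (a : ℕ) : 2 ^ (∑ i ∈ Icc 1 a, (i - 1)) ≤ ∏ i ∈ Icc 1 a, (2 ^ i - 1) := by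
  rw [← Finset.prod_pow_eq_pow_sum]
  apply Finset.prod_le_prod
  · intro i _; positivity
  · intro i hi
    simp only [Finset.mem_Icc] at hi
    have h1 : 2 ^ (i - 1) * 2 = 2 ^ i := by
      rw [← pow_succ]; congr 1; omega
    have h2 : 1 ≤ 2 ^ (i - 1) := Nat.one_le_two_pow
    omega

lemma rhs_le (p b : ℕ) (hp3 : 3 ≤ p) :
    2 ^ b * ∏ i ∈ Icc 1 b, (p ^ i - 1) / (p - 1) ≤ p ^ (∑ i ∈ Icc 1 b, i) := by
  have hpp : ∏ i ∈ Icc 1 b, p ^ i = p ^ (∑ i ∈ Icc 1 b, i) :=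
    Finset.prod_pow_eq_pow_sum _ _ _
  have h2b : (2:ℕ) ^ b = ∏ _i ∈ Icc 1 b, 2 := by
    rw [Finset.prod_const, Nat.card_Icc]; congr 1
  rw [← hpp, h2b, ← Finset.prod_mul_distrib]
  apply Finset.prod_le_prod
  · intro i _; positivity
  · intro i _
    rw [Nat.mul_comm]
    calc (p ^ i - 1) / (p - 1) * 2 ≤ (p ^ i - 1) / (p - 1) * (p - 1) :=
          Nat.mul_le_mul_left _ (by omega)
      _ ≤ p ^ i - 1 := Nat.div_mul_le_self _ _
      _ ≤ p ^ i := Nat.sub_le _ _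

lemma two_pow_succ_le_three_pow {b : ℕ} (hb : 2 ≤ b) : 2 ^ (b + 1) ≤ 3 ^ b := by
  induction b with
  | zero => omega
  | succ k ih =>
    rcases Nat.lt_or_ge k 2 with h | h
    · have hk1 : k = 1 := by omega
      subst hk1; norm_num
    · have h1 := ih h
      calc 2 ^ (k + 2) = 2 * 2 ^ (k + 1) := by ring
        _ ≤ 2 * 3 ^ k := by omega
        _ ≤ 3 * 3 ^ k := by omega
        _ = 3 ^ (k + 1) := by ring

lemma two_pow_add_two_le_three_pow {b : ℕ} (hb : 4 ≤ b) : 2 ^ (b + 2) ≤ 3 ^ b := by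
  induction b with
  | zero => omega
  | succ k ih =>
    rcases Nat.lt_or_ge k 4 with h | h
    · have hk1 : k = 3 := by omega
      subst hk1; norm_num
    · have h1 := ih h
      calc 2 ^ (k + 3) = 2 * 2 ^ (k + 2) := by ring
        _ ≤ 2 * 3 ^ k := by omega
        _ ≤ 3 * 3 ^ k := by omega
        _ = 3 ^ (k + 1) := by ring

lemma log_succ_le (n p : ℕ) (hn : 4 ≤ n) (hp3 : 3 ≤ p) :
    Nat.log p n + 1 ≤ Nat.log 2 n := by
  have hn0 : n ≠ 0 := by omega
  rw [Nat.le_log_iff_pow_le one_lt_two hn0]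
  rcases Nat.lt_or_ge (Nat.log p n) 2 with h | h
  · calc 2 ^ (Nat.log p n + 1) ≤ 2 ^ 2 := Nat.pow_le_pow_right (by norm_num) (by omega)
      _ ≤ n := by norm_num; omega
  · calc 2 ^ (Nat.log p n + 1) ≤ 3 ^ Nat.log p n := two_pow_succ_le_three_pow h
      _ ≤ p ^ Nat.log p n := Nat.pow_le_pow_left hp3 _
      _ ≤ n := Nat.pow_log_le_self p hn0

theorem prod_two_pow_sub_one_gt (n p : ℕ) (hn : 4 ≤ n) (hp : p.Prime) (hodd : Odd p) :
    ∏ i ∈ Finset.Icc 1 (Nat.log 2 n), (2 ^ i - 1) >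
      ∏ i ∈ Finset.Icc 1 (Nat.log p n), (p ^ i - 1) / (p - 1) := by
  obtain ⟨k, hk⟩ := hodd
  have hp2 := hp.two_le
  have hp3 : 3 ≤ p := by omega
  have hn0 : n ≠ 0 := by omega
  have ha2 : 2 ≤ Nat.log 2 n := by
    rw [Nat.le_log_iff_pow_le one_lt_two hn0]; norm_num; omega
  have hpb : p ^ Nat.log p n ≤ n := Nat.pow_log_le_self p hn0
  have hn2a : n < 2 ^ (Nat.log 2 n + 1) := Nat.lt_pow_succ_log_self one_lt_two n
  have hab : Nat.log p n + 1 ≤ Nat.log 2 n := log_succ_le n p hn hp3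
  generalize hag : Nat.log 2 n = a at ha2 hn2a hab ⊢
  generalize hbg : Nat.log p n = b at hpb hab ⊢
  clear hag hbg hk
  -- helper facts
  have hL := lhs_ge a
  have hE := sum_Icc_pred a
  have hE2 : 2 * (∑ i ∈ Icc 1 a, (i - 1)) + a = a * a := by
    obtain ⟨c, rfl⟩ := Nat.exists_eq_add_of_le (show 1 ≤ a by omega)
    have hc : 1 + c - 1 = c := by omega
    rw [hc] at hE
    nlinarith [hE]
  by_cases hb0 : b = 0
  · subst hb0
    have h1 : Finset.Icc 1 0 = (∅ : Finset ℕ) := Finset.Icc_eq_empty (by omega)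
    rw [h1, Finset.prod_empty]
    have hE1 : 1 ≤ ∑ i ∈ Icc 1 a, (i - 1) := by nlinarith [hE2]
    calc (1:ℕ) < 2 ^ 1 := by norm_num
      _ ≤ 2 ^ (∑ i ∈ Icc 1 a, (i - 1)) := Nat.pow_le_pow_right (by norm_num) hE1
      _ ≤ ∏ i ∈ Icc 1 a, (2 ^ i - 1) := hL
  have hb1 : 1 ≤ b := by omega
  by_cases hab2 : b + 2 ≤ a
  · -- main case
    have hR := rhs_le p b hp3
    have hF := sum_Icc_id' b
    have hpbn : p ^ b < 2 ^ (a + 1) := lt_of_le_of_lt hpb hn2a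
    set E := ∑ i ∈ Icc 1 a, (i - 1) with hEdef
    set F := ∑ i ∈ Icc 1 b, i with hFdef
    have key : p ^ F < 2 ^ (b + E) := by
      have hsq : (p ^ F) ^ 2 < (2 ^ (b + E)) ^ 2 := by
        have e1 : (p ^ F) ^ 2 = (p ^ b) ^ (b + 1) := by
          rw [← pow_mul, ← pow_mul]; congr 1; omega
        have hexp : (a + 1) * (b + 1) ≤ 2 * (b + E) := by
          have hmul : (b + 2) * a ≤ a * a := Nat.mul_le_mul_right a hab2
          nlinarith [hE2, hmul]
        calc (p ^ F) ^ 2 = (p ^ b) ^ (b + 1) := e1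
          _ < (2 ^ (a + 1)) ^ (b + 1) := Nat.pow_lt_pow_left hpbn (by omega)
          _ = 2 ^ ((a + 1) * (b + 1)) := by rw [← pow_mul]
          _ ≤ 2 ^ (2 * (b + E)) := Nat.pow_le_pow_right (by norm_num) hexp
          _ = (2 ^ (b + E)) ^ 2 := by rw [← pow_mul, Nat.mul_comm]
      exact lt_of_pow_lt_pow_left₀ 2 (Nat.zero_le _) hsq
    have hfin : 2 ^ b * ∏ i ∈ Icc 1 b, (p ^ i - 1) / (p - 1)
        < 2 ^ b * ∏ i ∈ Icc 1 a, (2 ^ i - 1) := by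
      calc 2 ^ b * ∏ i ∈ Icc 1 b, (p ^ i - 1) / (p - 1) ≤ p ^ F := hR
        _ < 2 ^ (b + E) := key
        _ = 2 ^ b * 2 ^ E := pow_add 2 b E
        _ ≤ 2 ^ b * ∏ i ∈ Icc 1 a, (2 ^ i - 1) := Nat.mul_le_mul_left _ hL
    exact Nat.lt_of_mul_lt_mul_left hfin
  · -- a = b + 1
    have ha : a = b + 1 := by omega
    subst ha
    have h3b : 3 ^ b < 2 ^ (b + 2) := by
      calc 3 ^ b ≤ p ^ b := Nat.pow_le_pow_left hp3 _
        _ ≤ n := hpb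
        _ < 2 ^ (b + 2) := hn2a
    have hb3 : b ≤ 3 := by
      by_contra hc
      push_neg at hc
      have := two_pow_add_two_le_three_pow (show 4 ≤ b by omega)
      omega
    interval_cases b
    · have h1 : ∏ i ∈ Icc 1 1, (p ^ i - 1) / (p - 1) = 1 := by
        simp [Nat.div_self (show 0 < p - 1 by omega)]
      rw [h1]
      decide
    · have hple : p ≤ 3 := by
        by_contra hc
        push_neg at hc
        have h4 : 4 ^ 2 ≤ p ^ 2 := Nat.pow_le_pow_left hc 2
        norm_num at h4
        have h5 : p ^ 2 < 2 ^ 4 := lt_of_le_of_lt hpb hn2a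
        norm_num at h5
        omega
      have : p = 3 := by omega
      subst this
      decide
    · have hple : p ≤ 3 := by
        by_contra hc
        push_neg at hc
        have h4 : 4 ^ 3 ≤ p ^ 3 := Nat.pow_le_pow_left hc 3
        norm_num at h4
        have : p ^ 3 < 2 ^ 5 := lt_of_le_of_lt hpb hn2a
        norm_num at this
        omega
      have : p = 3 := by omega
      subst this
      decide
end

section
/- Let p ≥ 3 be a prime, α_r ≥ 1 an integer (with α_r ≥ 2 if p = 3), t = p^{α_r}, and k = ⌊log_2 t⌋. Then the function f(α_1) = ∏_{i=1}^{α_1+k}(2^i−1) / ( ∏_{i=1}^{α_1}(2^i−1) · ∏_{j=1}^{α_r}((p^j−1)/(p−1)) · (α_1+α_r)!/(α_1! α_r!) ) is strictly monotone increasing in the nonnegative integer α_1, i.e., f(α_1+1) > f(α_1) for all α_1 ≥ 0. -/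
set_option maxHeartbeats 1000000


theorem f_strict_mono (p αr : ℕ) (hp : p.Prime) (hp3 : 3 ≤ p) (hαr : 1 ≤ αr)
    (h3 : p = 3 → 2 ≤ αr) :
    let k := Nat.log 2 (p ^ αr)
    let f : ℕ → ℚ := fun m =>
      (∏ i ∈ Finset.Icc 1 (m + k), ((2 : ℚ) ^ i - 1)) /
        ((∏ i ∈ Finset.Icc 1 m, ((2 : ℚ) ^ i - 1)) *
          (∏ j ∈ Finset.Icc 1 αr, (((p : ℚ) ^ j - 1) / ((p : ℚ) - 1))) *
          ((Nat.factorial (m + αr) : ℚ) / ((Nat.factorial m : ℚ) * (Nat.factorial αr : ℚ))))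
    ∀ α₁ : ℕ, f (α₁ + 1) > f α₁ := by
  intro k f α₁
  -- k ≥ αr
  have hk : αr ≤ k := by
    have hx : 2 ^ αr ≤ p ^ αr := Nat.pow_le_pow_left (by omega) αr
    exact (Nat.le_log_iff_pow_le (by norm_num) (by positivity)).mpr hx
  -- positivity of the 2-power products
  have hpos2 : ∀ m : ℕ, (0:ℚ) < ∏ i ∈ Finset.Icc 1 m, ((2:ℚ)^i - 1) := by
    intro m
    apply Finset.prod_pos
    intro i hi
    simp only [Finset.mem_Icc] at hi
    have : (2:ℚ)^1 ≤ 2^i := pow_le_pow_right₀ (by norm_num) hi.1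
    simp only [pow_one] at this
    linarith
  have hP : (0:ℚ) < ∏ j ∈ Finset.Icc 1 αr, (((p : ℚ) ^ j - 1) / ((p : ℚ) - 1)) := by
    apply Finset.prod_pos
    intro j hj
    simp only [Finset.mem_Icc] at hj
    have hp' : (3:ℚ) ≤ (p:ℚ) := by exact_mod_cast hp3
    have : (p:ℚ)^1 ≤ (p:ℚ)^j := pow_le_pow_right₀ (by linarith) hj.1
    simp only [pow_one] at this
    apply div_pos <;> linarith
  set a1 : ℚ := ∏ i ∈ Finset.Icc 1 (α₁ + k), ((2:ℚ)^i - 1) with ha1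
  set b : ℚ := ∏ i ∈ Finset.Icc 1 α₁, ((2:ℚ)^i - 1) with hb
  set P : ℚ := ∏ j ∈ Finset.Icc 1 αr, (((p : ℚ) ^ j - 1) / ((p : ℚ) - 1)) with hP'
  set F : ℚ := (Nat.factorial (α₁ + αr) : ℚ) with hF
  set G : ℚ := (Nat.factorial α₁ : ℚ) with hG
  set H : ℚ := (Nat.factorial αr : ℚ) with hH
  set x : ℚ := (2:ℚ)^(α₁ + k + 1) - 1 with hx
  set y : ℚ := (2:ℚ)^(α₁ + 1) - 1 with hy
  have ha1pos : 0 < a1 := hpos2 _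
  have hbpos : 0 < b := hpos2 _
  have hFpos : 0 < F := by positivity
  have hGpos : 0 < G := by positivity
  have hHpos : 0 < H := by positivity
  have hxpos : 0 < x := by
    have : (2:ℚ)^1 ≤ 2^(α₁+k+1) := pow_le_pow_right₀ (by norm_num) (by omega)
    simp only [pow_one] at this; simp only [hx]; linarith
  have hypos : 0 < y := by
    have : (2:ℚ)^1 ≤ 2^(α₁+1) := pow_le_pow_right₀ (by norm_num) (by omega)
    simp only [pow_one] at this; simp only [hy]; linarith
  -- rewrite the m+1 products / factorials
  have hA1 : ∏ i ∈ Finset.Icc 1 (α₁ + 1 + k), ((2:ℚ)^i - 1) = a1 * x := by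
    rw [show α₁ + 1 + k = (α₁ + k) + 1 from by omega,
      Finset.prod_Icc_succ_top (by omega)]
  have hA2 : ∏ i ∈ Finset.Icc 1 (α₁ + 1), ((2:ℚ)^i - 1) = b * y := by
    rw [Finset.prod_Icc_succ_top (by omega)]
  have hF1 : (Nat.factorial (α₁ + 1 + αr) : ℚ) = ((α₁:ℚ) + αr + 1) * F := by
    rw [show α₁ + 1 + αr = (α₁ + αr) + 1 from by omega, Nat.factorial_succ]
    push_cast
    ring
  have hG1 : (Nat.factorial (α₁ + 1) : ℚ) = ((α₁:ℚ) + 1) * G := by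
    rw [Nat.factorial_succ]
    push_cast
    ring
  -- key inequality
  have hv : ((αr:ℚ) + 1) ≤ 2^k := by
    have h1 : αr + 1 ≤ 2 ^ k := by
      calc αr + 1 ≤ 2 ^ αr := Nat.lt_two_pow_self
        _ ≤ 2 ^ k := Nat.pow_le_pow_right (by norm_num) hk
    exact_mod_cast h1
  have hu : (2:ℚ) ≤ 2^(α₁+1) := by
    have : (2:ℚ)^1 ≤ 2^(α₁+1) := pow_le_pow_right₀ (by norm_num) (by omega)
    simpa using this
  have key : y * ((α₁:ℚ) + αr + 1) < x * ((α₁:ℚ) + 1) := by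
    have hxe : (2:ℚ)^(α₁ + k + 1) = 2^(α₁+1) * 2^k := by
      rw [← pow_add]; ring_nf
    have hm : (0:ℚ) ≤ (α₁:ℚ) := Nat.cast_nonneg _
    have har : (1:ℚ) ≤ (αr:ℚ) := by exact_mod_cast hαr
    simp only [hx, hy, hxe]
    nlinarith [mul_nonneg (mul_nonneg (by linarith : (0:ℚ) ≤ (2:ℚ)^(α₁+1))
        (by linarith : (0:ℚ) ≤ (2:ℚ)^k - ((αr:ℚ)+1))) hm,
      mul_nonneg (mul_nonneg (by linarith : (0:ℚ) ≤ (2:ℚ)^(α₁+1)) (by linarith : (0:ℚ) ≤ (αr:ℚ))) hm,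
      mul_nonneg (by linarith : (0:ℚ) ≤ (2:ℚ)^(α₁+1)) (by linarith : (0:ℚ) ≤ (2:ℚ)^k - ((αr:ℚ)+1))]
  -- express both values as single fractions
  have hf0 : f α₁ = a1 * (G * H) / (b * P * F) := by
    show (a1) / (b * P * (F / (G * H))) = a1 * (G * H) / (b * P * F)
    rw [div_eq_div_iff (by positivity) (by positivity)]
    field_simp
  have hf1 : f (α₁ + 1) = a1 * x * (G * ((α₁:ℚ)+1) * H) / (b * y * P * (((α₁:ℚ) + αr + 1) * F)) := by
    show (∏ i ∈ Finset.Icc 1 (α₁ + 1 + k), ((2:ℚ)^i - 1)) /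
        ((∏ i ∈ Finset.Icc 1 (α₁ + 1), ((2:ℚ)^i - 1)) * P *
          ((Nat.factorial (α₁ + 1 + αr) : ℚ) / ((Nat.factorial (α₁ + 1) : ℚ) * H))) = _
    rw [hA1, hA2, hF1, hG1]
    have hz : (0:ℚ) < (α₁:ℚ) + αr + 1 := by positivity
    rw [div_eq_div_iff (by positivity) (by positivity)]
    field_simp
  rw [gt_iff_lt, hf0, hf1]
  rw [div_lt_div_iff₀ (by positivity) (by positivity)]
  have hM : (0:ℚ) < a1 * G * H * b * P * F :=
    mul_pos (mul_pos (mul_pos (mul_pos (mul_pos ha1pos hGpos) hHpos) hbpos) hP) hFpos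
  linarith [mul_lt_mul_of_pos_left key hM]
end

section
/- Let p ≥ 3 be a prime and α_r ≥ 1 (with α_r ≥ 2 if p = 3), and let k = ⌊log_2 p^{α_r}⌋. Then for every integer α_1 ≥ 0: ∏_{i=α_1+1}^{α_1+k}(2^i − 1) · α_1! · α_r! > ∏_{j=1}^{α_r} ((p^j − 1)/(p − 1)) · (α_1 + α_r)!. -/
open Finset

private lemma one_le_pow_sub (i : ℕ) (hi : 1 ≤ i) : 1 ≤ 2 ^ i - 1 := by
  have : 2 ^ 1 ≤ 2 ^ i := Nat.pow_le_pow_right (by norm_num) hi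
  omega

private lemma natStep (p m : ℕ) (hp : 3 ≤ p)
    (ih : (∏ j ∈ Ioc 0 m, (p ^ j - 1)) <
      (p - 1) ^ m * ∏ i ∈ Ioc 0 (Nat.log 2 (p ^ m)), (2 ^ i - 1)) :
    (∏ j ∈ Ioc 0 (m + 1), (p ^ j - 1)) <
      (p - 1) ^ (m + 1) * ∏ i ∈ Ioc 0 (Nat.log 2 (p ^ (m + 1))), (2 ^ i - 1) := by
  set k := Nat.log 2 (p ^ m) with hkdef
  set k' := Nat.log 2 (p ^ (m + 1)) with hk'def
  have hpm : p ^ m ≠ 0 := by positivity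
  have h2k : 2 ^ k ≤ p ^ m := Nat.pow_log_le_self 2 hpm
  have h2k' : p ^ (m + 1) < 2 ^ (k' + 1) := Nat.lt_pow_succ_log_self (by norm_num) _
  have hkk' : k + 1 ≤ k' := by
    have h1 : 2 ^ (k + 1) ≤ p ^ (m + 1) := by
      calc 2 ^ (k + 1) = 2 * 2 ^ k := by ring
        _ ≤ p * p ^ m := Nat.mul_le_mul (by omega) h2k
        _ = p ^ (m + 1) := by ring
    exact (Nat.le_log_iff_pow_le (by norm_num) (by positivity)).mpr h1
  have hsplit : (∏ i ∈ Ioc 0 k, (2 ^ i - 1)) * (∏ i ∈ Ioc k k', (2 ^ i - 1))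
      = ∏ i ∈ Ioc 0 k', (2 ^ i - 1) :=
    Finset.prod_Ioc_consecutive _ (Nat.zero_le k) (by omega)
  have hRsplit : ∏ j ∈ Ioc 0 (m + 1), (p ^ j - 1)
      = (∏ j ∈ Ioc 0 m, (p ^ j - 1)) * (p ^ (m + 1) - 1) :=
    Finset.prod_Ioc_succ_top (Nat.zero_le m) _
  set G := ∏ i ∈ Ioc k k', (2 ^ i - 1) with hG
  have hgain : 2 ^ k' - 1 ≤ G := by
    apply Finset.single_le_prod' (f := fun i => 2 ^ i - 1)
    · intro i hi
      simp only [mem_Ioc] at hi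
      exact one_le_pow_sub i (by omega)
    · simp only [mem_Ioc]; omega
  have hG1 : 1 ≤ G := le_trans (one_le_pow_sub k' (by omega)) hgain
  have hkey : p ^ (m + 1) - 1 ≤ (p - 1) * G := by
    have h1 : 2 * (2 ^ k' - 1) ≤ (p - 1) * (2 ^ k' - 1) :=
      Nat.mul_le_mul_right _ (by omega)
    have h2 : (p - 1) * (2 ^ k' - 1) ≤ (p - 1) * G := Nat.mul_le_mul_left _ hgain
    have h3 : (1 : ℕ) ≤ 2 ^ k' := Nat.one_le_two_pow
    have h4 : 2 ^ (k' + 1) = 2 * 2 ^ k' := by ring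
    have h5 : (1 : ℕ) ≤ p ^ (m + 1) := Nat.one_le_pow _ _ (by omega)
    omega
  calc ∏ j ∈ Ioc 0 (m + 1), (p ^ j - 1)
      = (∏ j ∈ Ioc 0 m, (p ^ j - 1)) * (p ^ (m + 1) - 1) := hRsplit
    _ ≤ (∏ j ∈ Ioc 0 m, (p ^ j - 1)) * ((p - 1) * G) := Nat.mul_le_mul_left _ hkey
    _ < ((p - 1) ^ m * ∏ i ∈ Ioc 0 k, (2 ^ i - 1)) * ((p - 1) * G) := by
        have hx : 0 < (p - 1) * G := Nat.mul_pos (by omega) hG1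
        exact (Nat.mul_lt_mul_right hx).mpr ih
    _ = (p - 1) ^ (m + 1) * ((∏ i ∈ Ioc 0 k, (2 ^ i - 1)) * G) := by ring
    _ = (p - 1) ^ (m + 1) * ∏ i ∈ Ioc 0 k', (2 ^ i - 1) := by rw [hsplit]

private lemma natA (p m : ℕ) (hp : 3 ≤ p) (hm : 1 ≤ m) (h3 : p = 3 → 2 ≤ m) :
    (∏ j ∈ Ioc 0 m, (p ^ j - 1)) <
      (p - 1) ^ m * ∏ i ∈ Ioc 0 (Nat.log 2 (p ^ m)), (2 ^ i - 1) := by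
  rcases eq_or_lt_of_le hp with hp3 | hp4
  · -- p = 3, base m = 2
    have hm2 : 2 ≤ m := h3 hp3.symm
    subst hp3
    induction m, hm2 using Nat.le_induction with
    | base =>
      have h1 : Nat.log 2 (3 ^ 2) = 3 := by
        rw [Nat.log_eq_iff] <;> norm_num
      rw [h1]
      norm_num [Finset.prod_Ioc_succ_top, Finset.Ioc_self]
    | succ n hn ih => exact natStep 3 n (by norm_num) (ih (by omega) (fun _ => by omega))
  · -- p ≥ 4, base m = 1
    induction m, hm using Nat.le_induction with
    | base =>
      have hk2 : 2 ≤ Nat.log 2 (p ^ 1) := by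
        have : 2 ^ 2 ≤ p ^ 1 := by simpa using (by omega : 4 ≤ p)
        exact (Nat.le_log_iff_pow_le (by norm_num) (by positivity)).mpr this
      have h3le : 2 ^ 2 - 1 ≤ ∏ i ∈ Ioc 0 (Nat.log 2 (p ^ 1)), (2 ^ i - 1) := by
        apply Finset.single_le_prod' (f := fun i => 2 ^ i - 1) (a := 2)
        · simp only [mem_Ioc]; omega
        · intro i hi
          simp only [mem_Ioc] at hi
          exact one_le_pow_sub i (by omega)
      have : ∏ j ∈ Ioc 0 1, (p ^ j - 1) = p - 1 := by simp
      rw [this, pow_one]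
      calc p - 1 < (p - 1) * 3 := by omega
        _ ≤ (p - 1) * ∏ i ∈ Ioc 0 (Nat.log 2 (p ^ 1)), (2 ^ i - 1) :=
          Nat.mul_le_mul_left _ (by simpa using h3le)
    | succ n hn ih => exact natStep p n hp (ih (fun h => by omega))

theorem replacement_inequality (p αr : ℕ) (hp : p.Prime) (hp3 : 3 ≤ p) (hαr : 1 ≤ αr)
    (h3 : p = 3 → 2 ≤ αr) (k : ℕ) (hk : k = Nat.log 2 (p ^ αr)) (α₁ : ℕ) :
    (∏ i ∈ Finset.Icc (α₁ + 1) (α₁ + k), ((2 : ℚ) ^ i - 1)) *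
        (Nat.factorial α₁ : ℚ) * (Nat.factorial αr : ℚ) >
      (∏ j ∈ Finset.Icc 1 αr, (((p : ℚ) ^ j - 1) / ((p : ℚ) - 1))) *
        (Nat.factorial (α₁ + αr) : ℚ) := by
  have hp1 : (1 : ℚ) < (p : ℚ) := by exact_mod_cast (by omega : 1 < p)
  set Q : ℚ := ∏ j ∈ Finset.Icc 1 αr, (((p : ℚ) ^ j - 1) / ((p : ℚ) - 1)) with hQdef
  set P : ℚ := ∏ i ∈ Finset.Icc 1 k, ((2 : ℚ) ^ i - 1) with hPdef
  -- Q positive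
  have hQpos : 0 < Q := by
    apply Finset.prod_pos
    intro j hj
    simp only [mem_Icc] at hj
    have h1 : (1 : ℚ) < (p : ℚ) ^ j := by
      calc (1 : ℚ) < (p : ℚ) ^ 1 := by simpa using hp1
        _ ≤ (p : ℚ) ^ j := pow_le_pow_right₀ (by linarith) hj.1
    exact div_pos (by linarith) (by linarith)
  -- key : Q < P
  have hQP : Q < P := by
    have hA := natA p αr hp3 hαr h3
    rw [← hk] at hA
    have hcast2 : ∀ s : Finset ℕ, (∀ i ∈ s, 1 ≤ i) →
        ((∏ i ∈ s, (2 ^ i - 1) : ℕ) : ℚ) = ∏ i ∈ s, ((2 : ℚ) ^ i - 1) := by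
      intro s hs
      rw [Nat.cast_prod]
      apply Finset.prod_congr rfl
      intro i hi
      have : 1 ≤ 2 ^ i := Nat.one_le_two_pow
      push_cast [this]
      ring
    have hcastp : ((∏ j ∈ Ioc 0 αr, (p ^ j - 1) : ℕ) : ℚ)
        = ∏ j ∈ Ioc 0 αr, ((p : ℚ) ^ j - 1) := by
      rw [Nat.cast_prod]
      apply Finset.prod_congr rfl
      intro j hj
      have : 1 ≤ p ^ j := Nat.one_le_pow _ _ (by omega)
      push_cast [this]
      ring
    have hQeq : Q = (∏ j ∈ Ioc 0 αr, ((p : ℚ) ^ j - 1)) / ((p : ℚ) - 1) ^ αr := by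
      rw [hQdef, Finset.prod_div_distrib, Finset.prod_const, Nat.card_Icc,
        ← Finset.Icc_add_one_left_eq_Ioc]
      norm_num
    have hPeq : P = ∏ i ∈ Ioc 0 k, ((2 : ℚ) ^ i - 1) := by
      rw [hPdef, ← Finset.Icc_add_one_left_eq_Ioc, zero_add]
    have hdpos : (0 : ℚ) < ((p : ℚ) - 1) ^ αr := pow_pos (by linarith) _
    rw [hQeq, hPeq, div_lt_iff₀ hdpos]
    calc ∏ j ∈ Ioc 0 αr, ((p : ℚ) ^ j - 1)
        < ((p - 1 : ℕ) : ℚ) ^ αr * ∏ i ∈ Ioc 0 k, ((2 : ℚ) ^ i - 1) := by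
          rw [← hcast2 (Ioc 0 k) (fun i hi => by simp only [mem_Ioc] at hi; omega),
            ← hcastp]
          exact_mod_cast hA
      _ = (∏ i ∈ Ioc 0 k, ((2 : ℚ) ^ i - 1)) * ((p : ℚ) - 1) ^ αr := by
          have : ((p - 1 : ℕ) : ℚ) = (p : ℚ) - 1 := by
            push_cast [Nat.cast_sub (by omega : 1 ≤ p)]; ring
          rw [this]; ring
  -- facts for the induction step
  have hkαr : αr ≤ k := by
    rw [hk]
    exact (Nat.le_log_iff_pow_le (by norm_num) (by positivity)).mpr
      (Nat.pow_le_pow_left (by omega) αr)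
  have h2k : (αr : ℚ) + 1 ≤ 2 ^ k := by
    have h1 : αr + 1 ≤ 2 ^ αr := Nat.lt_two_pow_self (n := αr)
    have h2 : (2 : ℕ) ^ αr ≤ 2 ^ k := Nat.pow_le_pow_right (by norm_num) hkαr
    exact_mod_cast le_trans h1 h2
  -- induction on α₁
  induction α₁ with
  | zero =>
    simp only [Nat.zero_add, Nat.factorial_zero, Nat.cast_one, mul_one, zero_add]
    have : (0 : ℚ) < (Nat.factorial αr : ℚ) := by exact_mod_cast αr.factorial_pos
    exact mul_lt_mul_of_pos_right hQP this
  | succ n ih =>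
    set f : ℕ → ℚ := fun i => (2 : ℚ) ^ i - 1 with hf
    set A : ℚ := ∏ i ∈ Finset.Icc (n + 1) (n + k), f i with hA
    set A' : ℚ := ∏ i ∈ Finset.Icc (n + 1 + 1) (n + 1 + k), f i with hA'
    have hid : f (n + 1) * A' = A * f (n + k + 1) := by
      rw [hA', Finset.Icc_add_one_left_eq_Ioc, Finset.mul_prod_Ioc_eq_prod_Icc (by omega : n + 1 ≤ n + 1 + k)]
      rw [hA, show n + 1 + k = n + k + 1 by ring,
        Finset.prod_Icc_succ_top (by omega : n + 1 ≤ n + k + 1) f]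
    have hfpos : ∀ i, 1 ≤ i → 0 < f i := by
      intro i hi
      have : (2 : ℚ) ^ 1 ≤ 2 ^ i := pow_le_pow_right₀ (by norm_num) hi
      simp only [hf]
      norm_num at this ⊢
      linarith
    have hstep : ((n : ℚ) + 1 + αr) * f (n + 1) ≤ ((n : ℚ) + 1) * f (n + k + 1) := by
      have h1 : (2 : ℚ) ^ k * f (n + 1) ≤ f (n + k + 1) := by
        simp only [hf]
        have : (1 : ℚ) ≤ 2 ^ k := one_le_pow₀ (by norm_num)
        have heq : (2 : ℚ) ^ (n + k + 1) = 2 ^ k * 2 ^ (n + 1) := by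
          rw [← pow_add]; ring_nf
        rw [heq]
        nlinarith
      have h2 : ((n : ℚ) + 1 + αr) ≤ ((n : ℚ) + 1) * 2 ^ k := by
        have : ((n : ℚ) + 1) * ((αr : ℚ) + 1) ≤ ((n : ℚ) + 1) * 2 ^ k := by
          apply mul_le_mul_of_nonneg_left h2k (by positivity)
        have hn0 : (0 : ℚ) ≤ n := by positivity
        have hαr0 : (0 : ℚ) ≤ αr := by positivity
        nlinarith
      have hfp := hfpos (n + 1) (by omega)
      calc ((n : ℚ) + 1 + αr) * f (n + 1) ≤ ((n : ℚ) + 1) * 2 ^ k * f (n + 1) :=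
        mul_le_mul_of_nonneg_right h2 (le_of_lt hfp)
        _ = ((n : ℚ) + 1) * (2 ^ k * f (n + 1)) := by ring
        _ ≤ ((n : ℚ) + 1) * f (n + k + 1) :=
          mul_le_mul_of_nonneg_left h1 (by positivity)
    -- combine
    have hfact1 : (Nat.factorial (n + 1) : ℚ) = ((n : ℚ) + 1) * (Nat.factorial n : ℚ) := by
      rw [Nat.factorial_succ]; push_cast; ring
    have hfact2 : (Nat.factorial (n + 1 + αr) : ℚ)
        = ((n : ℚ) + 1 + αr) * (Nat.factorial (n + αr) : ℚ) := by
      rw [show n + 1 + αr = (n + αr) + 1 by ring, Nat.factorial_succ]; push_cast; ring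
    have hfp := hfpos (n + 1) (by omega)
    have hfp2 := hfpos (n + k + 1) (by omega)
    have hmain : f (n + 1) * (A' * (Nat.factorial (n + 1) : ℚ) * (Nat.factorial αr : ℚ))
        > f (n + 1) * (Q * (Nat.factorial (n + 1 + αr) : ℚ)) := by
      have hfactpos : (0 : ℚ) < (Nat.factorial (n + αr) : ℚ) := by
        exact_mod_cast Nat.factorial_pos _
      calc f (n + 1) * (Q * (Nat.factorial (n + 1 + αr) : ℚ))
          = Q * (Nat.factorial (n + αr) : ℚ) * (((n : ℚ) + 1 + αr) * f (n + 1)) := by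
            rw [hfact2]; ring
        _ ≤ Q * (Nat.factorial (n + αr) : ℚ) * (((n : ℚ) + 1) * f (n + k + 1)) := by
            apply mul_le_mul_of_nonneg_left hstep
            positivity
        _ < A * (Nat.factorial n : ℚ) * (Nat.factorial αr : ℚ)
              * (((n : ℚ) + 1) * f (n + k + 1)) := by
            apply mul_lt_mul_of_pos_right ih
            positivity
        _ = (A * f (n + k + 1)) * (((n : ℚ) + 1) * (Nat.factorial n : ℚ))
              * (Nat.factorial αr : ℚ) := by ring
        _ = f (n + 1) * (A' * (Nat.factorial (n + 1) : ℚ) * (Nat.factorial αr : ℚ)) := by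
            rw [← hid, hfact1]; ring
    exact lt_of_mul_lt_mul_left hmain (le_of_lt hfp)
end
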